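/- Let Γ ∈ ℝ^{n×ν} and V ∈ ℝ^{ν×n} be real matrices and let r = rank Γ. Let T ∈ ℝ^{n×n} be an invertible matrix such that each of the last n−r rows of T is a left null vector of Γ (i.e., the last n−r rows of TΓ are zero). Write TΓVT^{-1} in block form with top-left r×r block Λ_r. Then Λ_r is invertible if and only if the sum of all r×r principal minors of ΓV is nonzero. -/

import Mathlib

open Matrix Finset

/-- The principal minor of a square matrix `M` indexed by the set `I`. -/
noncomputable def principalMinor {n : ℕ} (M : Matrix (Fin n) (Fin n) ℝ) (I : Finset (Fin n)) : ℝ :=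
  (M.submatrix (fun i : {x // x ∈ I} => (i : Fin n)) (fun i : {x // x ∈ I} => (i : Fin n))).det

/-- The sum of all `r × r` principal minors of the square matrix `M`. -/
noncomputable def sumMinors {n : ℕ} (r : ℕ) (M : Matrix (Fin n) (Fin n) ℝ) : ℝ :=
  ∑ I ∈ Finset.univ.powersetCard r, principalMinor M I

section Aux

open Polynomial

variable {R : Type*} [CommRing R] {n : ℕ}

/-- Principal minor over a general commutative ring. -/
noncomputable def pmin (M : Matrix (Fin n) (Fin n) R) (I : Finset (Fin n)) : R :=
  (M.submatrix (fun i : {x // x ∈ I} => (i : Fin n)) (fun i : {x // x ∈ I} => (i : Fin n))).det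

lemma det_ite_single (M : Matrix (Fin n) (Fin n) R) (s : Finset (Fin n)) :
    (Matrix.of fun i => if i ∈ s then M i else Pi.single i (1 : R)).det = pmin M s := by
  classical
  rw [← Matrix.det_submatrix_equiv_self (Equiv.sumCompl (· ∈ s)) (Matrix.of fun i : Fin n => if i ∈ s then M i else Pi.single i (1 : R))]
  have : ((Matrix.of fun i => if i ∈ s then M i else Pi.single i (1 : R)).submatrix
      (Equiv.sumCompl (· ∈ s)) (Equiv.sumCompl (· ∈ s))) =
      Matrix.fromBlocks
        (M.submatrix (fun i : {x // x ∈ s} => (i : Fin n)) (fun i : {x // x ∈ s} => (i : Fin n)))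
        (M.submatrix (fun i : {x // x ∈ s} => (i : Fin n)) (fun i : {x // ¬ x ∈ s} => (i : Fin n)))
        0 1 := by
    ext i j
    cases i with
    | inl i =>
      cases j with
      | inl j => simp [i.2]
      | inr j => simp [i.2]
    | inr i =>
      cases j with
      | inl j =>
        have : (j : Fin n) ≠ (i : Fin n) := fun h => i.2 (h ▸ j.2)
        simp [i.2, Pi.single_apply, this]
      | inr j =>
        simp [i.2, Pi.single_apply, Matrix.one_apply, Subtype.ext_iff, eq_comm]
  rw [this, Matrix.det_fromBlocks_zero₂₁, Matrix.det_one, mul_one]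
  rfl

lemma det_add_smul_one_expand (M : Matrix (Fin n) (Fin n) R) (x : R) :
    (M + x • (1 : Matrix (Fin n) (Fin n) R)).det =
      ∑ s : Finset (Fin n), x ^ (n - s.card) * pmin M s := by
  classical
  have hrows : (M + x • (1 : Matrix (Fin n) (Fin n) R)) =
      Matrix.of (((fun i => M i : Fin n → Fin n → R) + (fun i => x • (Pi.single i 1 : Fin n → R) : Fin n → Fin n → R))) := by
    ext i j
    simp [Matrix.one_apply, Pi.single_apply, eq_comm]
  rw [hrows]
  refine Eq.trans ((Matrix.detRowAlternating (R := R) (n := Fin n)).toMultilinearMap.map_add_univ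
    (fun i => M i) (fun i => x • (Pi.single i 1 : Fin n → R))) ?_
  apply Finset.sum_congr rfl
  intro s _
  have hpw : (s.piecewise (fun i => M i : Fin n → Fin n → R) (fun i => x • (Pi.single i 1 : Fin n → R) : Fin n → Fin n → R)) =
      fun i => (if i ∈ s then (1 : R) else x) •
        (s.piecewise (fun i => M i) (fun i => Pi.single i (1 : R)) i) := by
    funext i
    by_cases h : i ∈ s <;> simp [Finset.piecewise, h]
  rw [hpw, MultilinearMap.map_smul_univ, smul_eq_mul]
  have hprod : (∏ i, if i ∈ s then (1 : R) else x) = x ^ (n - s.card) := by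
    rw [← Finset.prod_mul_prod_compl s]
    rw [Finset.prod_eq_one (fun i hi => if_pos hi), one_mul,
      Finset.prod_congr rfl (fun i hi => if_neg (Finset.mem_compl.mp hi)),
      Finset.prod_const, Finset.card_compl, Fintype.card_fin]
  have hrows2 : (s.piecewise (fun i => M i : Fin n → Fin n → R)
        (fun i => (Pi.single i 1 : Fin n → R))) =
      (fun i : Fin n => if i ∈ s then M i else (Pi.single i 1 : Fin n → R)) := by
    funext i
    by_cases h : i ∈ s <;> simp [Finset.piecewise, h]
  rw [hprod, hrows2]
  congr 1
  exact det_ite_single M s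

lemma coeff_det_eq_sum_minors (M : Matrix (Fin n) (Fin n) R) (r : ℕ) (hrn : r ≤ n) :
    ((M.map Polynomial.C + (X : R[X]) • 1).det).coeff (n - r) =
      ∑ I ∈ Finset.univ.powersetCard r, pmin M I := by
  classical
  rw [det_add_smul_one_expand]
  have hfs := Polynomial.finset_sum_coeff (R := R) Finset.univ
    (fun s : Finset (Fin n) => (X : R[X]) ^ (n - s.card) * pmin (M.map Polynomial.C) s) (n - r)
  refine hfs.trans ?_
  have hm : ∀ s : Finset (Fin n), pmin (M.map Polynomial.C) s = Polynomial.C (pmin M s) := by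
    intro s
    unfold pmin
    rw [show (M.map Polynomial.C).submatrix (fun i : {x // x ∈ s} => (i : Fin n))
        (fun i : {x // x ∈ s} => (i : Fin n)) =
        (M.submatrix (fun i : {x // x ∈ s} => (i : Fin n))
          (fun i : {x // x ∈ s} => (i : Fin n))).map Polynomial.C from rfl]
    exact ((Polynomial.C (R := R) : R →+* R[X]).map_det
      (M.submatrix (fun i : {x // x ∈ s} => (i : Fin n))
        (fun i : {x // x ∈ s} => (i : Fin n)))).symm
  have key : ∀ s : Finset (Fin n),
      ((X : R[X]) ^ (n - s.card) * pmin (M.map Polynomial.C) s).coeff (n - r) =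
        if s.card = r then pmin M s else 0 := by
    intro s
    rw [hm, mul_comm, Polynomial.coeff_C_mul, Polynomial.coeff_X_pow]
    have hsn : s.card ≤ n := by
      simpa using Finset.card_le_univ s
    by_cases h : s.card = r
    · rw [if_pos h, if_pos (by omega), mul_one]
    · rw [if_neg h, if_neg (by omega), mul_zero]
  rw [Finset.sum_congr rfl (fun s _ => key s)]
  rw [Finset.powersetCard_eq_filter, Finset.powerset_univ, Finset.sum_filter]

lemma det_conj_poly (M T : Matrix (Fin n) (Fin n) R) (hT : IsUnit T.det) :
    ((T * M * T⁻¹).map Polynomial.C + (X : R[X]) • 1).det =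
      (M.map Polynomial.C + (X : R[X]) • 1).det := by
  have h1 : (T.map Polynomial.C) * ((T⁻¹).map Polynomial.C) = 1 := by
    rw [← Matrix.map_mul, Matrix.mul_nonsing_inv _ hT,
      Matrix.map_one _ (map_zero _) (map_one _)]
  have h2 : (T * M * T⁻¹).map Polynomial.C + (X : R[X]) • 1 =
      (T.map Polynomial.C) * (M.map Polynomial.C + (X : R[X]) • 1) * ((T⁻¹).map Polynomial.C) := by
    rw [mul_add, add_mul, Matrix.map_mul, Matrix.map_mul]
    congr 1
    rw [Matrix.mul_smul, Matrix.mul_one, Matrix.smul_mul, h1]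
  rw [h2, Matrix.det_mul, Matrix.det_mul, mul_comm ((T.map Polynomial.C).det) _, mul_assoc,
    ← Matrix.det_mul, h1, Matrix.det_one, mul_one]

end Aux

/-- The reduced Jacobian (the top-left `r × r` block of `T (Γ V) T⁻¹`, where the
last `n - r` rows of `T` are left null vectors of `Γ`) is invertible iff the sum
of all `r × r` principal minors of `Γ V` is nonzero. -/
theorem reduced_jacobian_nonsingular_iff (n ν : ℕ)
    (Γ : Matrix (Fin n) (Fin ν) ℝ) (V : Matrix (Fin ν) (Fin n) ℝ)
    (r : ℕ) (hr : r = Γ.rank) (hrn : r ≤ n)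
    (T : Matrix (Fin n) (Fin n) ℝ) (hT : IsUnit T.det)
    (hTnull : ∀ i : Fin n, r ≤ (i : ℕ) → ∀ j : Fin ν, (T * Γ) i j = 0) :
    (Matrix.of fun a b : Fin r =>
        (T * (Γ * V) * T⁻¹) (Fin.castLE hrn a) (Fin.castLE hrn b)).det ≠ 0 ↔
      sumMinors r (Γ * V) ≠ 0 := by
  classical
  set A : Matrix (Fin n) (Fin n) ℝ := T * (Γ * V) * T⁻¹ with hA
  have hA0 : ∀ i : Fin n, r ≤ (i : ℕ) → ∀ j : Fin n, A i j = 0 := by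
    intro i hi j
    have hassoc : A = (T * Γ) * (V * T⁻¹) := by
      rw [hA, ← Matrix.mul_assoc, ← Matrix.mul_assoc]
    rw [hassoc, Matrix.mul_apply]
    exact Finset.sum_eq_zero fun k _ => by rw [hTnull i hi k, zero_mul]
  set Ix : Finset (Fin n) := Finset.univ.image (Fin.castLE hrn) with hIxdef
  have hmem : ∀ i : Fin n, i ∈ Ix ↔ (i : ℕ) < r := by
    intro i
    constructor
    · intro h
      obtain ⟨a, _, ha⟩ := Finset.mem_image.mp h
      rw [← ha]
      exact a.isLt
    · intro h
      exact Finset.mem_image.mpr ⟨⟨(i : ℕ), h⟩, Finset.mem_univ _, by ext; rfl⟩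
  have hIxcard : Ix.card = r := by
    rw [hIxdef, Finset.card_image_of_injective _ (Fin.castLE_injective hrn),
      Finset.card_univ, Fintype.card_fin]
  -- the top-left block determinant equals the principal minor on Ix
  let e : Fin r ≃ {x // x ∈ Ix} :=
    { toFun := fun a => ⟨Fin.castLE hrn a, (hmem _).mpr a.isLt⟩
      invFun := fun x => ⟨((x : Fin n) : ℕ), (hmem _).mp x.2⟩
      left_inv := fun a => rfl
      right_inv := fun x => Subtype.ext (Fin.ext rfl) }
  have hblock : (Matrix.of fun a b : Fin r => A (Fin.castLE hrn a) (Fin.castLE hrn b)).det =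
      principalMinor A Ix := by
    have : (Matrix.of fun a b : Fin r => A (Fin.castLE hrn a) (Fin.castLE hrn b)) =
        (A.submatrix (fun i : {x // x ∈ Ix} => (i : Fin n))
          (fun i : {x // x ∈ Ix} => (i : Fin n))).submatrix e e := rfl
    rw [this, Matrix.det_submatrix_equiv_self]
    rfl
  -- sumMinors of A reduces to the single principal minor on Ix
  have hsumA : sumMinors r A = principalMinor A Ix := by
    rw [sumMinors]
    apply Finset.sum_eq_single_of_mem Ix (Finset.mem_powersetCard_univ.mpr hIxcard)
    intro I hI hne
    have hIcard : I.card = r := Finset.mem_powersetCard_univ.mp hI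
    have : ∃ i ∈ I, r ≤ (i : ℕ) := by
      by_contra hcon
      push_neg at hcon
      have hsub : I ⊆ Ix := fun i hi => (hmem i).mpr (hcon i hi)
      exact hne (Finset.eq_of_subset_of_card_le hsub (by omega))
    obtain ⟨i, hiI, hir⟩ := this
    exact Matrix.det_eq_zero_of_row_eq_zero ⟨i, hiI⟩ fun j => hA0 i hir _
  -- sumMinors is invariant under the similarity transformation
  have hinv : sumMinors r A = sumMinors r (Γ * V) := by
    have e1 : sumMinors r A = ∑ I ∈ Finset.univ.powersetCard r, pmin A I := rfl
    have e2 : sumMinors r (Γ * V) = ∑ I ∈ Finset.univ.powersetCard r, pmin (Γ * V) I := rfl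
    rw [e1, e2, ← coeff_det_eq_sum_minors A r hrn, ← coeff_det_eq_sum_minors (Γ * V) r hrn,
      hA, det_conj_poly (Γ * V) T hT]
  rw [show (Matrix.of fun a b : Fin r =>
      (T * (Γ * V) * T⁻¹) (Fin.castLE hrn a) (Fin.castLE hrn b)).det =
      principalMinor A Ix from hblock, ← hsumA, hinv]
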